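/- arXiv:1809.01220 — 2 statements merged into one kernel-verified Lean document; each statement's English description precedes it below -/
import Mathlib

section
/- Suppose r(h) < 1 for every safe history h. Let Δ : ℝ → ℝ satisfy 0 ≤ Δ x ≤ 1 for all x ∈ ℝ, and let f be a real-valued function on trajectories such that ser(τ) ≤ Δ(f(τ)) for every safe trajectory τ with p(τ) > 0. Then er(s₀, π) ≤ ∑_{all trajectories τ} p(τ) · Δ(f(τ)). -/
open Finset
open scoped Classical

noncomputable section

/-- The restriction of a trajectory `τ : Fin (n+1) → S` to its first `t+1` entries. -/
def pre {S : Type*} {n : ℕ} (τ : Fin (n + 1) → S) (t : ℕ) (ht : t + 1 ≤ n + 1) :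
    Fin (t + 1) → S :=
  fun i => τ (Fin.castLE ht i)

lemma pre_snoc {S : Type*} {m : ℕ} (g : Fin (m + 1) → S) (s' : S) (t : ℕ)
    (ht : t + 1 ≤ m + 1) (ht' : t + 1 ≤ m + 2) :
    pre (Fin.snoc g s' : Fin (m + 2) → S) t ht' = pre g t ht := by
  funext i
  show (Fin.snoc g s' : Fin (m + 2) → S) (Fin.castLE ht' i) = g (Fin.castLE ht i)
  have h1 : (Fin.castLE ht' i : Fin (m + 2)) = Fin.castSucc (Fin.castLE ht i) := rfl
  rw [h1, Fin.snoc_castSucc]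

lemma sum_snoc_split {S : Type*} [Fintype S] (C : Set S) (s₀ : S) {m : ℕ}
    (F : (Fin (m + 2) → S) → ℝ) :
    ∑ h ∈ univ.filter (fun h : Fin (m + 2) → S => h 0 = s₀ ∧ ∀ i, h i ∈ C), F h
      = ∑ g ∈ univ.filter (fun g : Fin (m + 1) → S => g 0 = s₀ ∧ ∀ i, g i ∈ C),
          ∑ s' ∈ univ.filter (fun s' => s' ∈ C), F (Fin.snoc g s') := by
  rw [← Finset.sum_product']
  refine Finset.sum_nbij' (fun h => (Fin.init h, h (Fin.last (m+1))))
      (fun p => Fin.snoc p.1 p.2) ?_ ?_ ?_ ?_ ?_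
  · intro h hh
    simp only [mem_filter, mem_univ, true_and, mem_product] at hh ⊢
    obtain ⟨h0, hc⟩ := hh
    refine ⟨⟨?_, fun i => hc _⟩, hc _⟩
    show h (Fin.castSucc 0) = s₀
    simpa using h0
  · intro p hp
    simp only [mem_filter, mem_univ, true_and, mem_product] at hp ⊢
    obtain ⟨⟨h0, hc⟩, hs⟩ := hp
    constructor
    · show (Fin.snoc p.1 p.2 : Fin (m+2) → S) (Fin.castSucc 0) = s₀
      rw [Fin.snoc_castSucc]; exact h0
    · intro i
      refine Fin.lastCases ?_ ?_ i
      · rw [Fin.snoc_last]; exact hs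
      · intro j; rw [Fin.snoc_castSucc]; exact hc j
  · intro h _; exact Fin.snoc_init_self h
  · intro p _
    simp only [Fin.init_snoc, Fin.snoc_last]
  · intro h _; rw [Fin.snoc_init_self]

lemma sum_prod_eq_one {S : Type*} [Fintype S] (C : Set S) (s₀ : S) (hs₀ : s₀ ∈ C)
    (g : (t : ℕ) → (Fin (t + 1) → S) → S → ℝ) :
    ∀ m : ℕ,
      (∀ t, t < m → ∀ h : Fin (t + 1) → S, h 0 = s₀ → (∀ i, h i ∈ C) →
        ∑ s' ∈ univ.filter (fun s' => s' ∈ C), g t h s' = 1) →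
      ∑ h ∈ univ.filter (fun h : Fin (m + 1) → S => h 0 = s₀ ∧ ∀ i, h i ∈ C),
        ∏ t : Fin m, g t (pre h t (Nat.succ_le_succ t.isLt.le)) (h t.succ) = 1
  | 0, _ => by
      have hset : (univ.filter (fun h : Fin 1 → S => h 0 = s₀ ∧ ∀ i, h i ∈ C))
          = {fun _ => s₀} := by
        ext h
        simp only [mem_filter, mem_univ, true_and, mem_singleton]
        constructor
        · rintro ⟨h0, -⟩; funext i; rw [Subsingleton.elim i 0, h0]
        · rintro rfl; exact ⟨rfl, fun _ => hs₀⟩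
      rw [hset, sum_singleton]
      simp
  | (m+1), hg => by
      rw [sum_snoc_split]
      have IH := sum_prod_eq_one C s₀ hs₀ g m
        (fun t ht => hg t (ht.trans (Nat.lt_succ_self m)))
      rw [← IH]
      refine sum_congr rfl fun h hh => ?_
      simp only [mem_filter, mem_univ, true_and] at hh
      have hsplit : ∀ s' : S,
          (∏ t : Fin (m+1), g t
            (pre (Fin.snoc h s' : Fin (m+2) → S) t (Nat.succ_le_succ t.isLt.le))
            ((Fin.snoc h s' : Fin (m+2) → S) t.succ))
          = (∏ t : Fin m, g t (pre h t (Nat.succ_le_succ t.isLt.le)) (h t.succ))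
              * g m h s' := by
        intro s'
        rw [Fin.prod_univ_castSucc]
        congr 1
        · refine Finset.prod_congr rfl fun t _ => ?_
          show g (t : ℕ)
              (pre (Fin.snoc h s' : Fin (m+2) → S) (t : ℕ)
                (Nat.succ_le_succ (t.isLt.le.trans (Nat.le_succ m))))
              ((Fin.snoc h s' : Fin (m+2) → S) (t.castSucc.succ))
            = g (t : ℕ) (pre h t (Nat.succ_le_succ t.isLt.le)) (h t.succ)
          rw [pre_snoc h s' (t : ℕ) (Nat.succ_le_succ t.isLt.le)]
          congr 1
          have h2 : (t.castSucc.succ : Fin (m+2)) = Fin.castSucc t.succ := rfl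
          rw [h2, Fin.snoc_castSucc]
        · have e2 : pre (Fin.snoc h s' : Fin (m+2) → S) m
              (Nat.succ_le_succ (Nat.le_succ m)) = h := by
            funext i
            show (Fin.snoc h s' : Fin (m+2) → S) _ = h i
            have h3 : (Fin.castLE (Nat.succ_le_succ (Nat.le_succ m)) i
                : Fin (m+2)) = Fin.castSucc i := rfl
            rw [h3, Fin.snoc_castSucc]
          show g m
              (pre (Fin.snoc h s' : Fin (m+2) → S) m (Nat.succ_le_succ (Nat.le_succ m)))
              ((Fin.snoc h s' : Fin (m+2) → S) ((Fin.last m).succ)) = g m h s'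
          rw [e2]
          congr 1
          have h4 : ((Fin.last m).succ : Fin (m+2)) = Fin.last (m+1) := rfl
          rw [h4, Fin.snoc_last]
      calc ∑ s' ∈ univ.filter (fun s' => s' ∈ C),
            ∏ t : Fin (m+1), g t
              (pre (Fin.snoc h s' : Fin (m+2) → S) t (Nat.succ_le_succ t.isLt.le))
              ((Fin.snoc h s' : Fin (m+2) → S) t.succ)
          = ∑ s' ∈ univ.filter (fun s' => s' ∈ C),
              (∏ t : Fin m, g t (pre h t (Nat.succ_le_succ t.isLt.le)) (h t.succ))
                * g m h s' := by
            exact sum_congr rfl fun s' _ => hsplit s'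
        _ = (∏ t : Fin m, g t (pre h t (Nat.succ_le_succ t.isLt.le)) (h t.succ))
              * ∑ s' ∈ univ.filter (fun s' => s' ∈ C), g m h s' := by
            rw [mul_sum]
        _ = _ := by rw [hg m (Nat.lt_succ_self m) h hh.1 hh.2, mul_one]

/-- The probability of the trajectory `τ` under policy `π`. -/
def prob {S A : Type*} {n : ℕ} (T : S → A → S → ℝ)
    (π : (t : ℕ) → (Fin (t + 1) → S) → A) (τ : Fin (n + 1) → S) : ℝ :=
  ∏ t : Fin n, T (τ t.castSucc) (π t (pre τ t (Nat.succ_le_succ t.isLt.le))) (τ t.succ)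

/-- The immediate risk of a history `h` of length `t+1`. -/
def risk {S A : Type*} [Fintype S] (T : S → A → S → ℝ) (C : Set S)
    (π : (t : ℕ) → (Fin (t + 1) → S) → A) {t : ℕ} (h : Fin (t + 1) → S) : ℝ :=
  ∑ s' ∈ univ.filter (fun s' => s' ∉ C), T (h (Fin.last t)) (π t h) s'

/-- The survival product of a trajectory. -/
def surv {S A : Type*} [Fintype S] {n : ℕ} (T : S → A → S → ℝ) (C : Set S)
    (π : (t : ℕ) → (Fin (t + 1) → S) → A) (τ : Fin (n + 1) → S) : ℝ :=
  ∏ t : Fin n, (1 - risk T C π (pre τ t (Nat.succ_le_succ t.isLt.le)))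

/-- The sequence execution risk of a trajectory. -/
def ser {S A : Type*} [Fintype S] {n : ℕ} (T : S → A → S → ℝ) (C : Set S)
    (π : (t : ℕ) → (Fin (t + 1) → S) → A) (τ : Fin (n + 1) → S) : ℝ :=
  if ∀ i, τ i ∈ C then (1 - surv T C π τ) / surv T C π τ else 0

/-- The execution risk of the policy `π` from the initial state `s₀`. -/
def er {S A : Type*} [Fintype S] (n : ℕ) (T : S → A → S → ℝ) (C : Set S)
    (π : (t : ℕ) → (Fin (t + 1) → S) → A) (s₀ : S) : ℝ :=
  1 - ∑ τ ∈ univ.filter (fun τ : Fin (n + 1) → S => τ 0 = s₀ ∧ ∀ i, τ i ∈ C), prob T π τ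

/-- First step of the proof of Theorem 1 of the paper: if `ser(τ) ≤ Δ(f(τ))` on safe
trajectories of positive probability and `0 ≤ Δ ≤ 1`, then
`er(s₀, π) ≤ ∑_τ p(τ) · Δ(f(τ))`. -/
theorem er_le_expectation_of_compose
    {S A : Type*} [Fintype S] [Nonempty S] [Fintype A] [Nonempty A]
    (n : ℕ) (hn : 1 ≤ n)
    (C : Set S) (s₀ : S) (hs₀ : s₀ ∈ C)
    (T : S → A → S → ℝ)
    (hT0 : ∀ s a s', 0 ≤ T s a s')
    (hT1 : ∀ s a, ∑ s', T s a s' = 1)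
    (π : (t : ℕ) → (Fin (t + 1) → S) → A)
    (hrisk : ∀ (t : ℕ), t ≤ n → ∀ h : Fin (t + 1) → S, h 0 = s₀ → (∀ i, h i ∈ C) →
      risk T C π h < 1)
    (Δ : ℝ → ℝ)
    (hΔ0 : ∀ x, 0 ≤ Δ x) (hΔ1 : ∀ x, Δ x ≤ 1)
    (f : (Fin (n + 1) → S) → ℝ)
    (hser : ∀ τ : Fin (n + 1) → S, τ 0 = s₀ → (∀ i, τ i ∈ C) → 0 < prob T π τ →
      ser T C π τ ≤ Δ (f τ)) :
    er n T C π s₀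
      ≤ ∑ τ ∈ univ.filter (fun τ : Fin (n + 1) → S => τ 0 = s₀), prob T π τ * Δ (f τ) := by
  classical
  set g : (t : ℕ) → (Fin (t + 1) → S) → S → ℝ :=
    fun t h s' => T (h (Fin.last t)) (π t h) s' / (1 - risk T C π h) with hgdef
  have hpre0 : ∀ (τ : Fin (n + 1) → S) (t : ℕ) (ht : t + 1 ≤ n + 1),
      τ 0 = s₀ → pre τ t ht 0 = s₀ := by
    intro τ t ht h0
    show τ (Fin.castLE ht 0) = s₀
    have : (Fin.castLE ht 0 : Fin (n + 1)) = 0 := by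
      apply Fin.ext; simp
    rw [this, h0]
  have hnorm : ∀ t, t ≤ n → ∀ h : Fin (t + 1) → S, h 0 = s₀ → (∀ i, h i ∈ C) →
      ∑ s' ∈ univ.filter (fun s' => s' ∈ C), g t h s' = 1 := by
    intro t ht h h0 hc
    have hr := hrisk t ht h h0 hc
    have hsum : ∑ s' ∈ univ.filter (fun s' => s' ∈ C), T (h (Fin.last t)) (π t h) s'
        = 1 - risk T C π h := by
      have hsplit := Finset.sum_filter_add_sum_filter_not univ (fun s' => s' ∈ C)
        (fun s' => T (h (Fin.last t)) (π t h) s')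
      rw [hT1] at hsplit
      unfold risk
      linarith
    have hne : (1 : ℝ) - risk T C π h ≠ 0 := by linarith
    simp only [hgdef, ← Finset.sum_div, hsum]
    exact div_self hne
  have key := sum_prod_eq_one C s₀ hs₀ g n (fun t ht h => hnorm t ht.le h)
  have hsurvpos : ∀ τ : Fin (n + 1) → S, τ 0 = s₀ → (∀ i, τ i ∈ C) →
      0 < surv T C π τ := by
    intro τ h0 hc
    refine Finset.prod_pos fun t _ => ?_
    have := hrisk t t.isLt.le (pre τ t (Nat.succ_le_succ t.isLt.le))
      (hpre0 τ t _ h0) (fun i => hc _)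
    linarith
  have hprobnn : ∀ τ : Fin (n + 1) → S, 0 ≤ prob T π τ := by
    intro τ
    exact Finset.prod_nonneg fun t _ => hT0 _ _ _
  have hdec : ∀ τ : Fin (n + 1) → S, τ 0 = s₀ → (∀ i, τ i ∈ C) →
      prob T π τ
        = (∏ t : Fin n, g t (pre τ t (Nat.succ_le_succ t.isLt.le)) (τ t.succ))
            * surv T C π τ := by
    intro τ h0 hc
    unfold prob surv
    rw [← Finset.prod_mul_distrib]
    refine Finset.prod_congr rfl fun t _ => ?_
    have hr := hrisk t t.isLt.le (pre τ t (Nat.succ_le_succ t.isLt.le))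
      (hpre0 τ t _ h0) (fun i => hc _)
    have hne : (1 : ℝ) - risk T C π (pre τ t (Nat.succ_le_succ t.isLt.le)) ≠ 0 := by
      linarith
    have hlast : pre τ t (Nat.succ_le_succ t.isLt.le) (Fin.last t) = τ t.castSucc := rfl
    simp only [hgdef, hlast]
    rw [div_mul_cancel₀ _ hne]
  have hstep : ∀ τ ∈ univ.filter
      (fun τ : Fin (n + 1) → S => τ 0 = s₀ ∧ ∀ i, τ i ∈ C),
      (∏ t : Fin n, g t (pre τ t (Nat.succ_le_succ t.isLt.le)) (τ t.succ)) - prob T π τ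
        = prob T π τ * ser T C π τ := by
    intro τ hτ
    simp only [mem_filter, mem_univ, true_and] at hτ
    obtain ⟨h0, hc⟩ := hτ
    have hs := hsurvpos τ h0 hc
    have hne : surv T C π τ ≠ 0 := ne_of_gt hs
    have aux : ∀ Q P : ℝ, P ≠ 0 → Q * P * ((1 - P) / P) = Q - Q * P := by
      intro Q P hP
      field_simp
    rw [ser, if_pos hc, hdec τ h0 hc, aux _ _ hne]
  have her : er n T C π s₀
      = ∑ τ ∈ univ.filter (fun τ : Fin (n + 1) → S => τ 0 = s₀ ∧ ∀ i, τ i ∈ C),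
          prob T π τ * ser T C π τ := by
    rw [er, ← key, ← Finset.sum_sub_distrib]
    exact Finset.sum_congr rfl hstep
  rw [her]
  calc ∑ τ ∈ univ.filter (fun τ : Fin (n + 1) → S => τ 0 = s₀ ∧ ∀ i, τ i ∈ C),
        prob T π τ * ser T C π τ
      ≤ ∑ τ ∈ univ.filter (fun τ : Fin (n + 1) → S => τ 0 = s₀ ∧ ∀ i, τ i ∈ C),
        prob T π τ * Δ (f τ) := by
        refine Finset.sum_le_sum fun τ hτ => ?_
        simp only [mem_filter, mem_univ, true_and] at hτ
        obtain ⟨h0, hc⟩ := hτ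
        rcases lt_or_eq_of_le (hprobnn τ) with hp | hp
        · exact mul_le_mul_of_nonneg_left (hser τ h0 hc hp) (le_of_lt hp)
        · rw [← hp, zero_mul, zero_mul]
    _ ≤ ∑ τ ∈ univ.filter (fun τ : Fin (n + 1) → S => τ 0 = s₀),
        prob T π τ * Δ (f τ) := by
        refine Finset.sum_le_sum_of_subset_of_nonneg ?_ ?_
        · intro τ hτ
          simp only [mem_filter, mem_univ, true_and] at hτ ⊢
          exact hτ.1
        · intro τ _ _
          exact mul_nonneg (hprobnn τ) (hΔ0 _)
end
end

section
/- Let γ ∈ ℝ and let R assign a real reward R(h, s') to every history h of length t+1 (0 ≤ t < n) and next state s' ∈ S. Define g(τ) = ∑_{t=0}^{n-1} γ^t · R(prefix_t τ, τ (t+1)) and f₁(τ) = ∑_{t=0}^{n-1} γ^t · ∑_{s' ∈ S} T (τ t) (π (prefix_t τ)) s' · R(prefix_t τ, s'). Then ∑_{all trajectories τ} p(τ)·f₁(τ) = ∑_{all trajectories τ} p(τ)·g(τ). -/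
open Finset
open scoped Classical

noncomputable section

lemma pre_snoc_s6 {S : Type*} {n t : ℕ} (τ' : Fin (n + 1) → S) (x : S)
    (h : t + 1 ≤ n + 2) (h' : t + 1 ≤ n + 1) :
    pre (Fin.snoc τ' x : Fin (n + 2) → S) t h = pre τ' t h' := by
  funext i
  simp only [pre]
  have : Fin.castLE h i = Fin.castSucc (Fin.castLE h' i) := by ext; simp
  rw [this, Fin.snoc_castSucc]

lemma prob_snoc {S A : Type*} {n : ℕ} (T : S → A → S → ℝ)
    (π : (t : ℕ) → (Fin (t + 1) → S) → A) (τ' : Fin (n + 1) → S) (x : S) :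
    prob T π (Fin.snoc τ' x : Fin (n + 2) → S)
      = prob T π τ' * T (τ' (Fin.last n)) (π n (pre τ' n le_rfl)) x := by
  unfold prob
  rw [Fin.prod_univ_castSucc]
  congr 1
  · apply Finset.prod_congr rfl
    intro i _
    have h1 : (Fin.castSucc i).castSucc = Fin.castSucc i.castSucc := rfl
    have h2 : (Fin.castSucc i).succ = Fin.castSucc i.succ := by ext; simp
    rw [h1, h2, Fin.snoc_castSucc, Fin.snoc_castSucc]
    simp only [Fin.coe_castSucc]
    rw [pre_snoc_s6 τ' x _ (Nat.succ_le_succ i.isLt.le)]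
  · have h3 : (Fin.last n).castSucc = Fin.castSucc (Fin.last n) := rfl
    have h4 : (Fin.last n).succ = Fin.last (n + 1) := rfl
    rw [h3, h4, Fin.snoc_castSucc, Fin.snoc_last]
    simp only [Fin.val_last]
    rw [pre_snoc_s6 τ' x _ le_rfl]

lemma sum_snoc {S : Type*} [Fintype S] {n : ℕ} (F : (Fin (n + 2) → S) → ℝ) :
    ∑ τ : Fin (n + 2) → S, F τ
      = ∑ τ' : Fin (n + 1) → S, ∑ x : S, F (Fin.snoc τ' x) := by
  rw [← Fintype.sum_equiv (Fin.snocEquiv (fun _ => S)) (fun p => F (Fin.snoc p.2 p.1)) F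
    (fun p => rfl), Fintype.sum_prod_type]
  exact Finset.sum_comm

lemma key {S A : Type*} [Fintype S] [Fintype A]
    (T : S → A → S → ℝ) (hT1 : ∀ s a, ∑ s', T s a s' = 1)
    (π : (t : ℕ) → (Fin (t + 1) → S) → A) :
    ∀ (n : ℕ) (t : ℕ) (ht : t < n) (ψ : (Fin (t + 1) → S) → S → ℝ),
      ∑ τ : Fin (n + 1) → S, prob T π τ *
          ∑ s', T (τ ⟨t, by omega⟩) (π t (pre τ t (by omega))) s' * ψ (pre τ t (by omega)) s'
        = ∑ τ : Fin (n + 1) → S, prob T π τ * ψ (pre τ t (by omega)) (τ ⟨t + 1, by omega⟩) := by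
  intro n
  induction n with
  | zero => intro t ht; omega
  | succ n ih =>
    intro t ht ψ
    rw [sum_snoc, sum_snoc]
    rcases Nat.lt_or_ge t n with htn | htn
    · -- t < n : marginalize out the last state and use IH
      have e1 : ∀ (τ' : Fin (n + 1) → S) (x : S),
          prob T π (Fin.snoc τ' x : Fin (n + 2) → S) *
            ∑ s', T ((Fin.snoc τ' x : Fin (n + 2) → S) ⟨t, by omega⟩)
                (π t (pre (Fin.snoc τ' x : Fin (n + 2) → S) t (by omega))) s' *
                ψ (pre (Fin.snoc τ' x : Fin (n + 2) → S) t (by omega)) s'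
          = prob T π τ' * T (τ' (Fin.last n)) (π n (pre τ' n le_rfl)) x *
              ∑ s', T (τ' ⟨t, by omega⟩) (π t (pre τ' t (by omega))) s' *
                ψ (pre τ' t (by omega)) s' := by
        intro τ' x
        rw [prob_snoc, pre_snoc_s6 τ' x _ (by omega)]
        have : (Fin.snoc τ' x : Fin (n + 2) → S) ⟨t, by omega⟩ = τ' ⟨t, by omega⟩ := by
          have : (⟨t, by omega⟩ : Fin (n + 2)) = Fin.castSucc ⟨t, by omega⟩ := rfl
          rw [this, Fin.snoc_castSucc]
        rw [this]
      have e2 : ∀ (τ' : Fin (n + 1) → S) (x : S),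
          prob T π (Fin.snoc τ' x : Fin (n + 2) → S) *
            ψ (pre (Fin.snoc τ' x : Fin (n + 2) → S) t (by omega))
              ((Fin.snoc τ' x : Fin (n + 2) → S) ⟨t + 1, by omega⟩)
          = prob T π τ' * T (τ' (Fin.last n)) (π n (pre τ' n le_rfl)) x *
              ψ (pre τ' t (by omega)) (τ' ⟨t + 1, by omega⟩) := by
        intro τ' x
        rw [prob_snoc, pre_snoc_s6 τ' x _ (by omega)]
        have : (Fin.snoc τ' x : Fin (n + 2) → S) ⟨t + 1, by omega⟩ = τ' ⟨t + 1, by omega⟩ := by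
          have : (⟨t + 1, by omega⟩ : Fin (n + 2)) = Fin.castSucc ⟨t + 1, by omega⟩ := rfl
          rw [this, Fin.snoc_castSucc]
        rw [this]
      simp only [e1, e2]
      have collapse : ∀ (τ' : Fin (n + 1) → S) (c : ℝ),
          ∑ x : S, prob T π τ' * T (τ' (Fin.last n)) (π n (pre τ' n le_rfl)) x * c
            = prob T π τ' * c := by
        intro τ' c
        rw [← Finset.sum_mul, ← Finset.mul_sum, hT1, mul_one]
      simp only [collapse]
      exact ih t htn ψ
    · -- t = n
      have htn' : n = t := by omega
      subst htn'
      have e1 : ∀ (τ' : Fin (n + 1) → S) (x : S),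
          prob T π (Fin.snoc τ' x : Fin (n + 2) → S) *
            ∑ s', T ((Fin.snoc τ' x : Fin (n + 2) → S) ⟨n, by omega⟩)
                (π n (pre (Fin.snoc τ' x : Fin (n + 2) → S) n (by omega))) s' *
                ψ (pre (Fin.snoc τ' x : Fin (n + 2) → S) n (by omega)) s'
          = prob T π τ' * T (τ' (Fin.last n)) (π n (pre τ' n le_rfl)) x *
              ∑ s', T (τ' (Fin.last n)) (π n (pre τ' n le_rfl)) s' *
                ψ (pre τ' n le_rfl) s' := by
        intro τ' x
        rw [prob_snoc, pre_snoc_s6 τ' x _ le_rfl]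
        have : (Fin.snoc τ' x : Fin (n + 2) → S) ⟨n, by omega⟩ = τ' (Fin.last n) := by
          have : (⟨n, by omega⟩ : Fin (n + 2)) = Fin.castSucc (Fin.last n) := rfl
          rw [this, Fin.snoc_castSucc]
        rw [this]
      have e2 : ∀ (τ' : Fin (n + 1) → S) (x : S),
          prob T π (Fin.snoc τ' x : Fin (n + 2) → S) *
            ψ (pre (Fin.snoc τ' x : Fin (n + 2) → S) n (by omega))
              ((Fin.snoc τ' x : Fin (n + 2) → S) ⟨n + 1, by omega⟩)
          = prob T π τ' * (T (τ' (Fin.last n)) (π n (pre τ' n le_rfl)) x *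
              ψ (pre τ' n le_rfl) x) := by
        intro τ' x
        rw [prob_snoc, pre_snoc_s6 τ' x _ le_rfl]
        have hx : (Fin.snoc τ' x : Fin (n + 2) → S) ⟨n + 1, by omega⟩ = x := by
          have : (⟨n + 1, by omega⟩ : Fin (n + 2)) = Fin.last (n + 1) := rfl
          rw [this, Fin.snoc_last]
        rw [hx, mul_assoc]
      simp only [e1, e2]
      apply Finset.sum_congr rfl
      intro τ' _
      rw [← Finset.sum_mul, ← Finset.mul_sum, ← Finset.mul_sum, hT1, mul_one]

lemma pre_zero {S : Type*} {n : ℕ} (τ : Fin (n + 1) → S) (t : ℕ) (h : t + 1 ≤ n + 1) :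
    pre τ t h 0 = τ 0 := rfl

/-- The function `f₁`, which replaces each realized reward by the expected reward of the
action taken, has the same expectation as the lifetime reward `g`. -/
theorem f1_expectation_eq_g_expectation
    {S A : Type*} [Fintype S] [Nonempty S] [Fintype A] [Nonempty A]
    (n : ℕ) (hn : 1 ≤ n) (s₀ : S)
    (T : S → A → S → ℝ)
    (hT0 : ∀ s a s', 0 ≤ T s a s')
    (hT1 : ∀ s a, ∑ s', T s a s' = 1)
    (π : (t : ℕ) → (Fin (t + 1) → S) → A)
    (γ : ℝ)
    (R : (t : ℕ) → (Fin (t + 1) → S) → S → ℝ) :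
    ∑ τ ∈ univ.filter (fun τ : Fin (n + 1) → S => τ 0 = s₀),
      prob T π τ *
        (∑ t : Fin n, γ ^ (t : ℕ) *
          ∑ s' : S, T (τ t.castSucc) (π t (pre τ t (Nat.succ_le_succ t.isLt.le))) s' *
            R t (pre τ t (Nat.succ_le_succ t.isLt.le)) s')
      = ∑ τ ∈ univ.filter (fun τ : Fin (n + 1) → S => τ 0 = s₀),
          prob T π τ *
            (∑ t : Fin n, γ ^ (t : ℕ) *
              R t (pre τ t (Nat.succ_le_succ t.isLt.le)) (τ t.succ)) := by
  classical
  rw [Finset.sum_filter, Finset.sum_filter]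
  have expand : ∀ (F : (Fin (n + 1) → S) → Fin n → ℝ),
      (∑ τ : Fin (n + 1) → S, if τ 0 = s₀ then prob T π τ * ∑ t : Fin n, F τ t else 0)
        = ∑ t : Fin n, ∑ τ : Fin (n + 1) → S,
            if τ 0 = s₀ then prob T π τ * F τ t else 0 := by
    intro F
    rw [Finset.sum_comm]
    apply Finset.sum_congr rfl
    intro τ _
    split_ifs with h
    · exact Finset.mul_sum _ _ _
    · simp
  rw [expand (fun τ t => γ ^ (t : ℕ) *
        ∑ s' : S, T (τ t.castSucc) (π t (pre τ t (Nat.succ_le_succ t.isLt.le))) s' *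
          R t (pre τ t (Nat.succ_le_succ t.isLt.le)) s'),
      expand (fun τ t => γ ^ (t : ℕ) *
        R t (pre τ t (Nat.succ_le_succ t.isLt.le)) (τ t.succ))]
  apply Finset.sum_congr rfl
  intro t _
  have hk := key T hT1 π n t t.isLt
    (fun h s' => if h 0 = s₀ then γ ^ (t : ℕ) * R t h s' else 0)
  calc
    ∑ τ : Fin (n + 1) → S, (if τ 0 = s₀ then prob T π τ * (γ ^ (t : ℕ) *
          ∑ s' : S, T (τ t.castSucc) (π t (pre τ t (Nat.succ_le_succ t.isLt.le))) s' *
            R t (pre τ t (Nat.succ_le_succ t.isLt.le)) s') else 0)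
      = ∑ τ : Fin (n + 1) → S, prob T π τ *
          ∑ s', T (τ ⟨(t : ℕ), by omega⟩) (π t (pre τ t (by omega))) s' *
            (if (pre τ t (by omega)) 0 = s₀ then
              γ ^ (t : ℕ) * R t (pre τ t (by omega)) s' else 0) := by
        apply Finset.sum_congr rfl
        intro τ _
        have hcast : τ t.castSucc = τ ⟨(t : ℕ), by omega⟩ := rfl
        by_cases h : τ 0 = s₀ <;>
          simp only [pre_zero, h, if_true, if_false, hcast, Finset.mul_sum,
            mul_zero, Finset.sum_const_zero, ite_true, ite_false]
        · exact Finset.sum_congr rfl fun s' _ => by ring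
    _ = ∑ τ : Fin (n + 1) → S, prob T π τ *
          (if (pre τ t (by omega)) 0 = s₀ then
            γ ^ (t : ℕ) * R t (pre τ t (by omega)) (τ ⟨(t : ℕ) + 1, by omega⟩) else 0) := hk
    _ = ∑ τ : Fin (n + 1) → S, (if τ 0 = s₀ then prob T π τ * (γ ^ (t : ℕ) *
          R t (pre τ t (Nat.succ_le_succ t.isLt.le)) (τ t.succ)) else 0) := by
        apply Finset.sum_congr rfl
        intro τ _
        have hsucc : τ ⟨(t : ℕ) + 1, by omega⟩ = τ t.succ := rfl
        by_cases h : τ 0 = s₀ <;>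
          simp [pre_zero, h, hsucc]
end
end
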